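/- Let $n \geq 1$, $k \geq 1$, and $0 = P_{-1} < P_0 \leq \cdots \leq P_k = 1$. Let $X_1,\ldots,X_n$ be i.i.d. uniform on $[0,1]$, $L_i = \min\{\ell : X_i \leq P_\ell\}$, and $M_n$ the number of $i$ with $L_i = \min_j L_j$. Then $E[M_n] = n P_0 + \sum_{\ell=1}^{k} n (P_\ell - P_{\ell-1})(1-P_{\ell-1})^{n-1}$. -/

import Mathlib

open MeasureTheory
open scoped Classical

namespace Stmt11Aux

noncomputable def g (P : ℕ → ℝ) (x : ℝ) : ℕ := sInf {ℓ : ℕ | x ≤ P ℓ}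

lemma measurable_g (P : ℕ → ℝ) : Measurable (g P) := by
  apply measurable_to_countable'
  intro m
  have hset : g P ⁻¹' {m} =
      (Set.Iic (P m) ∩ ⋂ j ∈ Finset.range m, Set.Ioi (P j)) ∪
        (if m = 0 then ⋂ ℓ : ℕ, Set.Ioi (P ℓ) else ∅) := by
    ext x
    simp only [Set.mem_preimage, Set.mem_singleton_iff, Set.mem_union, Set.mem_inter_iff,
      Set.mem_Iic, Set.mem_iInter, Set.mem_Ioi, Finset.mem_range, g]
    constructor
    · intro h
      rcases Set.eq_empty_or_nonempty {ℓ : ℕ | x ≤ P ℓ} with he | hne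
      · right
        have hm0 : m = 0 := by rw [← h, he, Nat.sInf_empty]
        rw [hm0, if_pos rfl]
        refine Set.mem_iInter.2 fun ℓ => ?_
        by_contra hc
        rw [Set.mem_Ioi, not_lt] at hc
        have hmem : ℓ ∈ {m : ℕ | x ≤ P m} := hc
        rw [he] at hmem
        exact hmem
      · left
        have h1 : x ≤ P m := by
          have := Nat.sInf_mem hne
          rwa [h] at this
        refine ⟨h1, fun j hj => ?_⟩
        have hnot : j ∉ {ℓ : ℕ | x ≤ P ℓ} := Nat.notMem_of_lt_sInf (by rw [h]; exact hj)
        exact lt_of_not_ge hnot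
    · rintro (⟨h1, h2⟩ | h)
      · refine le_antisymm (Nat.sInf_le h1) ?_
        by_contra hc
        push_neg at hc
        have hmem := Nat.sInf_mem (⟨m, h1⟩ : {ℓ : ℕ | x ≤ P ℓ}.Nonempty)
        exact absurd hmem (by simpa using not_le.2 (h2 _ hc))
      · split_ifs at h with hm
        · subst hm
          have hemp : {ℓ : ℕ | x ≤ P ℓ} = ∅ := by
            ext ℓ
            simp only [Set.mem_setOf_eq, Set.mem_empty_iff_false, iff_false, not_le]
            exact Set.mem_Ioi.1 (Set.mem_iInter.1 h ℓ)
          rw [hemp, Nat.sInf_empty]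
        · exact absurd h (Set.notMem_empty x)
  rw [hset]
  apply MeasurableSet.union
  · exact measurableSet_Iic.inter (MeasurableSet.biInter (Set.to_countable _)
      fun j _ => measurableSet_Ioi)
  · split_ifs
    · exact MeasurableSet.iInter fun ℓ => measurableSet_Ioi
    · exact MeasurableSet.empty

lemma mono' (k : ℕ) (P : ℕ → ℝ) (hmono : ∀ i, i < k → P i ≤ P (i + 1)) :
    ∀ a b, a ≤ b → b ≤ k → P a ≤ P b := by
  intro a b
  induction b with
  | zero => intro hab _; obtain rfl : a = 0 := Nat.le_zero.1 hab; exact le_rfl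
  | succ m ih =>
    intro hab hbk
    rcases eq_or_lt_of_le hab with h | h
    · rw [h]
    · have ham : a ≤ m := Nat.lt_succ_iff.1 h
      exact le_trans (ih ham (le_trans (Nat.le_succ m) hbk)) (hmono m hbk)

noncomputable def Islot (P : ℕ → ℝ) : ℕ → Set ℝ
  | 0 => Set.Iic (P 0)
  | (m + 1) => Set.Ioc (P m) (P (m + 1))

noncomputable def Uslot (P : ℕ → ℝ) : ℕ → Set ℝ
  | 0 => Set.univ
  | (m + 1) => Set.Ioi (P m)

lemma Islot_subset_Uslot (P : ℕ → ℝ) (ℓ : ℕ) : Islot P ℓ ⊆ Uslot P ℓ := by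
  cases ℓ with
  | zero => simp [Islot, Uslot]
  | succ m => exact fun x hx => hx.1

lemma Islot_le (P : ℕ → ℝ) (ℓ : ℕ) {x : ℝ} (hx : x ∈ Islot P ℓ) : x ≤ P ℓ := by
  cases ℓ with
  | zero => exact hx
  | succ m => exact hx.2

lemma key (n k : ℕ) (P : ℕ → ℝ) (hPk : P k = 1)
    (hmono : ∀ i, i < k → P i ≤ P (i + 1))
    (ω : Fin n → ℝ) (hω : ∀ j, ω j ∈ Set.Icc (0 : ℝ) 1) (i : Fin n) :
    g P (ω i) = sInf (Set.range fun j => g P (ω j)) ↔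
      ∃ ℓ, ℓ ≤ k ∧ ω i ∈ Islot P ℓ ∧ ∀ j, ω j ∈ Uslot P ℓ := by
  have hne : ∀ j, k ∈ {ℓ : ℕ | ω j ≤ P ℓ} := fun j => by
    simp only [Set.mem_setOf_eq, hPk]; exact (hω j).2
  have hLle : ∀ j, g P (ω j) ≤ k := fun j => Nat.sInf_le (hne j)
  have hself : ∀ j, ω j ≤ P (g P (ω j)) := fun j => Nat.sInf_mem ⟨k, hne j⟩
  have hlt : ∀ j m, m < g P (ω j) → P m < ω j := fun j m hm =>
    lt_of_not_ge (Nat.notMem_of_lt_sInf hm)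
  constructor
  · intro h
    refine ⟨g P (ω i), hLle i, ?_, ?_⟩
    · rcases hgi : g P (ω i) with _ | m
      · simpa [Islot] using (hgi ▸ hself i)
      · exact ⟨hlt i m (by omega), hgi ▸ hself i⟩
    · intro j
      rcases hgi : g P (ω i) with _ | m
      · simp [Uslot]
      · have hle : g P (ω i) ≤ g P (ω j) := h ▸ Nat.sInf_le ⟨j, rfl⟩
        exact hlt j m (by omega)
  · rintro ⟨ℓ, hℓk, hI, hU⟩
    have hgi : g P (ω i) = ℓ := by
      have hmem : ω i ≤ P ℓ := Islot_le P ℓ hI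
      have hle : g P (ω i) ≤ ℓ := Nat.sInf_le hmem
      rcases eq_or_lt_of_le hle with h | h
      · exact h
      · exfalso
        rcases ℓ with _ | m
        · omega
        · have h1 : ω i ≤ P m :=
            le_trans (hself i) (mono' k P hmono _ m (by omega) (by omega))
          exact absurd h1 (not_le.2 hI.1)
    have hlow : ∀ j, ℓ ≤ g P (ω j) := by
      intro j
      rcases ℓ with _ | m
      · exact Nat.zero_le _
      · by_contra hc
        push_neg at hc
        have h1 : ω j ≤ P m :=
          le_trans (hself j) (mono' k P hmono _ m (by omega) (by omega))
        exact absurd h1 (not_le.2 (hU j))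
    rw [hgi]
    refine le_antisymm (le_csInf ⟨g P (ω i), i, rfl⟩ ?_) (Nat.sInf_le ⟨i, hgi⟩)
    rintro b ⟨j, rfl⟩
    exact hlow j

end Stmt11Aux

open Stmt11Aux

/-- Expected number of winners in the implicit empty block scheme:
`E[M_n] = n P_0 + ∑_{ℓ=1}^k n (P_ℓ - P_{ℓ-1})(1-P_{ℓ-1})^{n-1}`. -/
theorem stmt11 (n k : ℕ) (hn : 1 ≤ n) (hk : 1 ≤ k)
    (P : ℕ → ℝ) (hP0 : 0 < P 0) (hmono : ∀ i, i < k → P i ≤ P (i + 1)) (hPk : P k = 1)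
    (μ : Measure (Fin n → ℝ))
    (hμ : μ = Measure.pi fun _ : Fin n => volume.restrict (Set.Icc (0 : ℝ) 1))
    (L : (Fin n → ℝ) → Fin n → ℕ)
    (hL : ∀ ω i, L ω i = sInf {ℓ : ℕ | ω i ≤ P ℓ})
    (M : (Fin n → ℝ) → ℕ)
    (hM : ∀ ω, M ω = (Finset.univ.filter fun i => L ω i = sInf (Set.range (L ω))).card) :
    ∫ ω, (M ω : ℝ) ∂μ
      = (n : ℝ) * P 0 + ∑ ℓ ∈ Finset.Icc 1 k,
          (n : ℝ) * (P ℓ - P (ℓ - 1)) * (1 - P (ℓ - 1)) ^ (n - 1) := by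
  -- basic facts about P
  have hPmono := mono' k P hmono
  have hP0le : ∀ ℓ, ℓ ≤ k → 0 < P ℓ := fun ℓ hℓ => lt_of_lt_of_le hP0 (hPmono 0 ℓ (Nat.zero_le _) hℓ)
  have hPle1 : ∀ ℓ, ℓ ≤ k → P ℓ ≤ 1 := fun ℓ hℓ => hPk ▸ hPmono ℓ k hℓ le_rfl
  -- measure-theoretic setup
  have hLeq : ∀ ω : Fin n → ℝ, L ω = fun j => g P (ω j) := fun ω => funext fun j => hL ω j
  haveI : IsProbabilityMeasure (volume.restrict (Set.Icc (0 : ℝ) 1)) :=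
    ⟨by simp [Real.volume_Icc]⟩
  haveI hμprob : IsProbabilityMeasure μ := by rw [hμ]; infer_instance
  set A : Fin n → Set (Fin n → ℝ) :=
    fun i => {ω | L ω i = sInf (Set.range (L ω))} with hA
  have hLmapMeas : Measurable (fun ω : Fin n → ℝ => fun j => g P (ω j)) :=
    measurable_pi_lambda _ fun j => (measurable_g P).comp (measurable_pi_apply j)
  have hAmeas : ∀ i, MeasurableSet (A i) := by
    intro i
    have : A i = (fun ω : Fin n → ℝ => fun j => g P (ω j)) ⁻¹'
        {v : Fin n → ℕ | v i = sInf (Set.range v)} := by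
      ext ω
      simp only [hA, Set.mem_setOf_eq, Set.mem_preimage, hLeq ω]
    rw [this]
    exact hLmapMeas (Set.to_countable _).measurableSet
  -- step 1: integral as sum of measures
  have hInt : ∫ ω, (M ω : ℝ) ∂μ = ∑ i : Fin n, (μ (A i)).toReal := by
    have hpt : ∀ ω, (M ω : ℝ) = ∑ i : Fin n, (A i).indicator (fun _ => (1 : ℝ)) ω := by
      intro ω
      rw [hM, Finset.card_filter]
      push_cast
      refine Finset.sum_congr rfl fun i _ => ?_
      by_cases h : L ω i = sInf (Set.range (L ω)) <;>
        simp [Set.indicator_apply, hA, h]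
    simp_rw [hpt]
    rw [integral_finset_sum _ fun i _ => (integrable_const (1 : ℝ)).indicator (hAmeas i)]
    refine Finset.sum_congr rfl fun i _ => ?_
    rw [integral_indicator_const (1 : ℝ) (hAmeas i)]
    simp [Measure.real]
  -- step 2: compute μ (A i)
  have hA_eq : ∀ i : Fin n, μ (A i) = ENNReal.ofReal (P 0) +
      ∑ ℓ ∈ Finset.Icc 1 k,
        ENNReal.ofReal ((P ℓ - P (ℓ - 1)) * (1 - P (ℓ - 1)) ^ (n - 1)) := by
    intro i
    set D : ℕ → Set (Fin n → ℝ) :=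
      fun ℓ => Set.pi Set.univ fun j => if j = i then Islot P ℓ else Uslot P ℓ with hD
    set S : Set (Fin n → ℝ) := Set.pi Set.univ fun _ => Set.Icc (0 : ℝ) 1 with hS
    have hSmeas : MeasurableSet S := MeasurableSet.univ_pi fun _ => measurableSet_Icc
    have hSfull : μ S = 1 := by
      rw [hμ, hS, Measure.pi_pi]
      simp [Measure.restrict_apply MeasurableSet.univ, Real.volume_Icc]
    have hScompl : μ Sᶜ = 0 := by
      rw [measure_compl hSmeas (measure_ne_top μ S), hSfull, measure_univ, tsub_self]
    have hinterS : ∀ T : Set (Fin n → ℝ), μ (T ∩ S) = μ T := by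
      intro T
      refine le_antisymm (measure_mono Set.inter_subset_left) ?_
      calc μ T ≤ μ ((T ∩ S) ∪ Sᶜ) := measure_mono (fun x hx => by
              by_cases hxS : x ∈ S
              · exact Or.inl ⟨hx, hxS⟩
              · exact Or.inr hxS)
        _ ≤ μ (T ∩ S) + μ Sᶜ := measure_union_le _ _
        _ = μ (T ∩ S) := by rw [hScompl, add_zero]
    have hAS : A i ∩ S = (⋃ ℓ ∈ Finset.range (k + 1), D ℓ) ∩ S := by
      ext ω
      simp only [Set.mem_inter_iff, hS, Set.mem_pi, Set.mem_univ, forall_true_left,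
        Set.mem_iUnion, Finset.mem_range, Nat.lt_succ_iff]
      constructor
      · rintro ⟨hωA, hωS⟩
        refine ⟨?_, hωS⟩
        have hωA' : g P (ω i) = sInf (Set.range fun j => g P (ω j)) := by
          have := hωA
          simp only [hA, Set.mem_setOf_eq, hLeq ω] at this
          exact this
        obtain ⟨ℓ, hℓk, hI, hU⟩ := (key n k P hPk hmono ω hωS i).1 hωA'
        refine ⟨ℓ, hℓk, ?_⟩
        intro j _
        by_cases hj : j = i
        · simp only [hj, if_pos rfl]; exact hI
        · simp only [if_neg hj]; exact hU j
      · rintro ⟨⟨ℓ, hℓk, hωD⟩, hωS⟩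
        refine ⟨?_, hωS⟩
        have hI : ω i ∈ Islot P ℓ := by
          have := hωD i (Set.mem_univ i); simpa using this
        have hU : ∀ j, ω j ∈ Uslot P ℓ := by
          intro j
          by_cases hj : j = i
          · exact hj ▸ Islot_subset_Uslot P ℓ hI
          · have := hωD j (Set.mem_univ j); simpa [hj] using this
        have : g P (ω i) = sInf (Set.range fun j => g P (ω j)) :=
          (key n k P hPk hmono ω hωS i).2 ⟨ℓ, hℓk, hI, hU⟩
        simp only [hA, Set.mem_setOf_eq, hLeq ω]
        exact this
    have hDmeas : ∀ ℓ, MeasurableSet (D ℓ) := by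
      intro ℓ
      refine MeasurableSet.univ_pi fun j => ?_
      by_cases hj : j = i <;> simp only [hj, if_pos rfl, if_neg] <;>
        rcases ℓ with _ | m <;>
        first
          | exact measurableSet_Iic
          | exact measurableSet_Ioc
          | exact MeasurableSet.univ
          | exact measurableSet_Ioi
          | assumption
    have hDdisj : ∀ ℓ m, ℓ < m → m ≤ k → Disjoint (D ℓ) (D m) := by
      intro ℓ m hlm hmk
      rw [Set.disjoint_left]
      intro ω h1 h2
      have hx1 : ω i ∈ Islot P ℓ := by have := h1 i (Set.mem_univ i); simpa using this
      have hx2 : ω i ∈ Islot P m := by have := h2 i (Set.mem_univ i); simpa using this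
      have hub : ω i ≤ P ℓ := Islot_le P ℓ hx1
      rcases m with _ | m'
      · omega
      · have hlb : P m' < ω i := hx2.1
        have : P ℓ ≤ P m' := hPmono ℓ m' (by omega) (by omega)
        linarith
    have hUnion : μ (⋃ ℓ ∈ Finset.range (k + 1), D ℓ) =
        ∑ ℓ ∈ Finset.range (k + 1), μ (D ℓ) := by
      refine measure_biUnion_finset ?_ fun ℓ _ => hDmeas ℓ
      intro a ha b hb hab
      simp only [Finset.coe_range, Set.mem_Iio] at ha hb
      rcases lt_or_gt_of_ne hab with h | h
      · exact hDdisj a b h (by omega)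
      · exact (hDdisj b a h (by omega)).symm
    have hμA : μ (A i) = ∑ ℓ ∈ Finset.range (k + 1), μ (D ℓ) := by
      rw [← hinterS (A i), hAS, hinterS, hUnion]
    -- product helper
    have hprod : ∀ s t : Set ℝ,
        (∏ j : Fin n, (volume.restrict (Set.Icc (0 : ℝ) 1)) (if j = i then s else t)) =
          (volume.restrict (Set.Icc (0 : ℝ) 1)) s *
            (volume.restrict (Set.Icc (0 : ℝ) 1)) t ^ (n - 1) := by
      intro s t
      rw [← Finset.mul_prod_erase Finset.univ _ (Finset.mem_univ i), if_pos rfl]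
      congr 1
      rw [Finset.prod_congr rfl fun j hj => by rw [if_neg (Finset.ne_of_mem_erase hj)],
        Finset.prod_const, Finset.card_erase_of_mem (Finset.mem_univ i),
        Finset.card_univ, Fintype.card_fin]
    have hres : ∀ t : Set ℝ, MeasurableSet t →
        (volume.restrict (Set.Icc (0 : ℝ) 1)) t = volume (t ∩ Set.Icc (0 : ℝ) 1) :=
      fun t ht => Measure.restrict_apply ht
    -- μ (D 0)
    have hD0 : μ (D 0) = ENNReal.ofReal (P 0) := by
      rw [hμ, hD, Measure.pi_pi, hprod]
      have h1 : (volume.restrict (Set.Icc (0 : ℝ) 1)) (Islot P 0) = ENNReal.ofReal (P 0) := by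
        rw [show Islot P 0 = Set.Iic (P 0) from rfl, hres _ measurableSet_Iic]
        have : Set.Iic (P 0) ∩ Set.Icc (0 : ℝ) 1 = Set.Icc 0 (P 0) := by
          ext x
          simp only [Set.mem_inter_iff, Set.mem_Iic, Set.mem_Icc]
          constructor
          · rintro ⟨h1, h2, h3⟩; exact ⟨h2, h1⟩
          · rintro ⟨h1, h2⟩
            exact ⟨h2, h1, le_trans h2 (hPle1 0 (by omega))⟩
        rw [this, Real.volume_Icc, sub_zero]
      have h2 : (volume.restrict (Set.Icc (0 : ℝ) 1)) (Uslot P 0) = 1 := by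
        rw [show Uslot P 0 = Set.univ from rfl]
        exact measure_univ
      rw [h1, h2, one_pow, mul_one]
    -- μ (D (m+1))
    have hDsucc : ∀ m, m + 1 ≤ k → μ (D (m + 1)) =
        ENNReal.ofReal ((P (m + 1) - P m) * (1 - P m) ^ (n - 1)) := by
      intro m hmk
      have hm0 : 0 < P m := hP0le m (by omega)
      have hm1 : P (m + 1) ≤ 1 := hPle1 (m + 1) hmk
      rw [hμ, hD, Measure.pi_pi, hprod]
      have h1 : (volume.restrict (Set.Icc (0 : ℝ) 1)) (Islot P (m + 1)) =
          ENNReal.ofReal (P (m + 1) - P m) := by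
        rw [show Islot P (m + 1) = Set.Ioc (P m) (P (m + 1)) from rfl,
          hres _ measurableSet_Ioc]
        have : Set.Ioc (P m) (P (m + 1)) ∩ Set.Icc (0 : ℝ) 1 = Set.Ioc (P m) (P (m + 1)) := by
          apply Set.inter_eq_left.2
          intro x hx
          exact ⟨le_of_lt (lt_trans hm0 hx.1), le_trans hx.2 hm1⟩
        rw [this, Real.volume_Ioc]
      have h2 : (volume.restrict (Set.Icc (0 : ℝ) 1)) (Uslot P (m + 1)) =
          ENNReal.ofReal (1 - P m) := by
        rw [show Uslot P (m + 1) = Set.Ioi (P m) from rfl, hres _ measurableSet_Ioi]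
        have : Set.Ioi (P m) ∩ Set.Icc (0 : ℝ) 1 = Set.Ioc (P m) 1 := by
          ext x
          simp only [Set.mem_inter_iff, Set.mem_Ioi, Set.mem_Icc, Set.mem_Ioc]
          constructor
          · rintro ⟨h1, _, h3⟩; exact ⟨h1, h3⟩
          · rintro ⟨h1, h2⟩; exact ⟨h1, le_of_lt (lt_trans hm0 h1), h2⟩
        rw [this, Real.volume_Ioc]
      rw [h1, h2]
      rw [ENNReal.ofReal_mul (by
        have := hPmono m (m + 1) (Nat.le_succ m) hmk; linarith),
        ENNReal.ofReal_pow (by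
          have := hPle1 m (by omega); linarith)]
    -- assemble
    have hsplit : Finset.range (k + 1) = insert 0 (Finset.Icc 1 k) := by
      ext x
      simp only [Finset.mem_range, Finset.mem_insert, Finset.mem_Icc]
      omega
    rw [hμA, hsplit, Finset.sum_insert (by simp), hD0]
    congr 1
    refine Finset.sum_congr rfl fun ℓ hℓ => ?_
    simp only [Finset.mem_Icc] at hℓ
    obtain ⟨m, rfl⟩ : ∃ m, ℓ = m + 1 := ⟨ℓ - 1, by omega⟩
    rw [hDsucc m (by omega)]
    norm_num
  -- step 3: finish
  rw [hInt]
  have hterm : ∀ i : Fin n, (μ (A i)).toReal =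
      P 0 + ∑ ℓ ∈ Finset.Icc 1 k, (P ℓ - P (ℓ - 1)) * (1 - P (ℓ - 1)) ^ (n - 1) := by
    intro i
    rw [hA_eq i, ENNReal.toReal_add ENNReal.ofReal_ne_top (by
      exact (ENNReal.sum_lt_top.2 fun ℓ _ => ENNReal.ofReal_lt_top).ne),
      ENNReal.toReal_ofReal (le_of_lt hP0),
      ENNReal.toReal_sum fun ℓ _ => ENNReal.ofReal_ne_top]
    congr 1
    refine Finset.sum_congr rfl fun ℓ hℓ => ?_
    simp only [Finset.mem_Icc] at hℓ
    have h1 : 0 ≤ P ℓ - P (ℓ - 1) := by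
      have := hPmono (ℓ - 1) ℓ (by omega) (by omega); linarith
    have h2 : (0 : ℝ) ≤ (1 - P (ℓ - 1)) ^ (n - 1) := by
      have h3 : (0 : ℝ) ≤ 1 - P (ℓ - 1) := by
        have := hPle1 (ℓ - 1) (by omega); linarith
      exact pow_nonneg h3 _
    exact ENNReal.toReal_ofReal (mul_nonneg h1 h2)
  simp_rw [hterm]
  rw [Finset.sum_const, Finset.card_univ, Fintype.card_fin, nsmul_eq_mul, mul_add,
    Finset.mul_sum]
  congr 1
  exact Finset.sum_congr rfl fun ℓ _ => by ring
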